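/- Commutativity of weak gradient with projection: for w ∈ H¹(T), the discrete weak gradient of the projected weak function Q_h w = {Q₀w, Q_b w} equals the L² projection of the classical gradient: ∇_w(Q_h w) = 𝒬_h(∇w), where Q₀, Q_b, 𝒬_h are L² projections onto P_k(T), P_k(∂T faces), and [P_k(T)]³ respectively. -/
import Mathlib


open scoped RealInnerProductSpace

/-- Commutativity of the weak gradient with projection: for
`w ∈ H¹(T)`, the discrete weak gradient of the projected weak function
`Q_h w = {Q₀w, Q_b w}` equals the L² projection of the classical gradient:
`∇_w(Q_h w) = 𝒬_h(∇w)`, where `Q₀, Q_b, 𝒬_h` are the L² projections onto `P_k(T)`,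
the face polynomials `P_k(∂T)`, and `[P_k(T)]³` respectively.

Abstraction: `A = L²(T)`, `Bd = L²(∂T)`, `Vv = [L²(T)]³` with polynomial subspaces
`Pk`, `Pkb`, `PkV`; the projections are characterized by range and orthogonality;
`w ∈ H¹(T)` is given by its L² realization `w0`, gradient `gw` and trace `wtr`,
tied together by the divergence theorem against test polynomials.  Any `G ∈ [P_k(T)]³`
satisfying the defining relation of `∇_w(Q_h w)` equals `𝒬_h(∇w) = QV gw`. -/
theorem stmt_10
    {A Bd Vv : Type*}
    [NormedAddCommGroup A] [InnerProductSpace ℝ A]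
    [NormedAddCommGroup Bd] [InnerProductSpace ℝ Bd]
    [NormedAddCommGroup Vv] [InnerProductSpace ℝ Vv]
    (Pk : Submodule ℝ A) (Pkb : Submodule ℝ Bd) (PkV : Submodule ℝ Vv)
    -- L² projections
    (Q0 : A →ₗ[ℝ] A) (hQ0mem : ∀ a, Q0 a ∈ Pk)
    (hQ0orth : ∀ a : A, ∀ p ∈ Pk, ⟪a - Q0 a, p⟫ = 0)
    (Qb : Bd →ₗ[ℝ] Bd) (hQbmem : ∀ b, Qb b ∈ Pkb)
    (hQborth : ∀ b : Bd, ∀ p ∈ Pkb, ⟪b - Qb b, p⟫ = 0)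
    (QV : Vv →ₗ[ℝ] Vv) (hQVmem : ∀ v, QV v ∈ PkV)
    (hQVorth : ∀ v : Vv, ∀ p ∈ PkV, ⟪v - QV v, p⟫ = 0)
    -- divergence and normal trace of polynomial test fields
    (divM : Vv →ₗ[ℝ] A) (nTr : Vv →ₗ[ℝ] Bd)
    (hdivMem : ∀ φ ∈ PkV, divM φ ∈ Pk)
    (hnTrMem : ∀ φ ∈ PkV, nTr φ ∈ Pkb)
    -- w ∈ H¹(T): value w0, gradient gw, boundary trace wtr, divergence theorem
    (w0 : A) (gw : Vv) (wtr : Bd)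
    (hDivThm : ∀ φ ∈ PkV, ⟪w0, divM φ⟫ = -⟪gw, φ⟫ + ⟪wtr, nTr φ⟫)
    -- G is the discrete weak gradient of Q_h w = {Q₀ w0, Q_b wtr}
    (G : Vv) (hGmem : G ∈ PkV)
    (hG : ∀ φ ∈ PkV, ⟪G, φ⟫ = -⟪Q0 w0, divM φ⟫ + ⟪Qb wtr, nTr φ⟫) :
    G = QV gw := by
  have key : ∀ φ ∈ PkV, ⟪G - QV gw, φ⟫ = 0 := by
    intro φ hφ
    have h1 : ⟪w0 - Q0 w0, divM φ⟫ = 0 := hQ0orth w0 _ (hdivMem φ hφ)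
    have h2 : ⟪wtr - Qb wtr, nTr φ⟫ = 0 := hQborth wtr _ (hnTrMem φ hφ)
    have h3 : ⟪gw - QV gw, φ⟫ = 0 := hQVorth gw φ hφ
    have hGφ := hG φ hφ
    have hDiv := hDivThm φ hφ
    rw [inner_sub_left] at h1 h2 h3 ⊢
    rw [hGφ]
    linarith
  have hmem : G - QV gw ∈ PkV := Submodule.sub_mem _ hGmem (hQVmem gw)
  have := key _ hmem
  have : G - QV gw = 0 := by
    rwa [inner_self_eq_zero] at this
  exact sub_eq_zero.mp this
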